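/- arXiv:1510.02378 — 5 statements merged into one kernel-verified Lean document; each statement's English description precedes it below -/
import Mathlib

section
/- Let n ≥ 0, r ≥ 2 and 0 ≤ s ≤ r−1 be integers, and for 1 ≤ j ≤ r−1 let η_j ≤ ζ_j be rational numbers with η_j < ζ_j whenever 1 ≤ j ≤ s. Then the maximum of b₀(τ) + s₀(τ) − 1 over all τ in the box T = ∏_{j=1}^{r−1}[η_j, ζ_j] satisfying i₀(τ) = 0 (i.e. τ_j ∉ ℤ for every 1 ≤ j ≤ s) is attained and equals s₁ − 1 − Σ_{j=1}^{r−1} ⌊η_j⌋, where s₁ = |{j : s+1 ≤ j ≤ r−1 and η_j ∈ ℤ}|. (This is equation (2) in the proof of Theorem 2.2: c_max = max{b₀(τ) + s₀(τ) − 1 : τ ∈ T, i₀(τ) = 0} = s₁ − 1 − Σ⌊η_j⌋.) -/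
lemma card_eq_sum_ite' {m : ℕ} (P : Fin m → Prop) [DecidablePred P] :
    (Nat.card {j : Fin m // P j} : ℤ) = ∑ j, if P j then 1 else 0 := by
  classical
  rw [Nat.card_eq_fintype_card, Fintype.card_subtype, Finset.card_filter]
  push_cast
  rfl

lemma card_sum_le {m : ℕ} (P Q : Fin m → Prop) [DecidablePred P] [DecidablePred Q]
    (f g : Fin m → ℤ)
    (h : ∀ j, f j + (if P j then 1 else 0) ≤ g j + (if Q j then 1 else 0)) :
    (∑ j, f j) + (Nat.card {j : Fin m // P j} : ℤ)
      ≤ (∑ j, g j) + (Nat.card {j : Fin m // Q j} : ℤ) := by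
  rw [card_eq_sum_ite', card_eq_sum_ite', ← Finset.sum_add_distrib, ← Finset.sum_add_distrib]
  exact Finset.sum_le_sum fun j _ => h j

/-- Equation (2) in the proof of Theorem 2.2: the maximum of
`b₀(τ) + s₀(τ) - 1` over the box `∏ [η_j, ζ_j]` subject to `τ_j ∉ ℤ` for
`1 ≤ j ≤ s` is attained and equals `s₁ - 1 - ∑ ⌊η_j⌋`, where
`b₀(τ) = -(⌊τ₁⌋ + ⋯ + ⌊τ_{r-1}⌋)`, `s₀(τ) = |{j : s+1 ≤ j ≤ r-1, τ_j ∈ ℤ}|`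
and `s₁ = |{j : s+1 ≤ j ≤ r-1, η_j ∈ ℤ}|`.  (Indices `1 ≤ j ≤ r-1` are
realized as `j : Fin (r-1)`; the 1-indexed condition `j ≤ s` becomes
`(j : ℕ) < s` and `s+1 ≤ j` becomes `s ≤ (j : ℕ)`.) -/
theorem stmt1 (n r s : ℕ) (hr : 2 ≤ r) (hs : s ≤ r - 1)
    (η ζ : Fin (r - 1) → ℚ)
    (hle : ∀ j, η j ≤ ζ j)
    (hlt : ∀ j : Fin (r - 1), (j : ℕ) < s → η j < ζ j) :
    IsGreatest
      {b : ℤ | ∃ τ : Fin (r - 1) → ℝ,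
        (∀ j, (η j : ℝ) ≤ τ j ∧ τ j ≤ (ζ j : ℝ)) ∧
        (∀ j : Fin (r - 1), (j : ℕ) < s → ∀ k : ℤ, τ j ≠ (k : ℝ)) ∧
        b = -(∑ j, ⌊τ j⌋)
          + (Nat.card {j : Fin (r - 1) // s ≤ (j : ℕ) ∧ ∃ k : ℤ, τ j = (k : ℝ)} : ℤ) - 1}
      ((Nat.card {j : Fin (r - 1) // s ≤ (j : ℕ) ∧ ∃ k : ℤ, η j = (k : ℚ)} : ℤ)
        - 1 - ∑ j, ⌊η j⌋) := by
  classical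
  set τq : Fin (r - 1) → ℚ := fun j =>
    if (j : ℕ) < s ∧ ∃ k : ℤ, η j = (k : ℚ) then η j + min (ζ j - η j) 1 / 2
    else η j with hτq
  have hcond : ∀ j : Fin (r - 1), ((j : ℕ) < s ∧ ∃ k : ℤ, η j = (k : ℚ)) →
      0 < min (ζ j - η j) 1 ∧ min (ζ j - η j) 1 ≤ 1 ∧ min (ζ j - η j) 1 ≤ ζ j - η j := by
    intro j h
    exact ⟨by have := hlt j h.1; simp [this, sub_pos], min_le_right _ _, min_le_left _ _⟩
  have hbound : ∀ j, η j ≤ τq j ∧ τq j ≤ ζ j := by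
    intro j
    by_cases h : (j : ℕ) < s ∧ ∃ k : ℤ, η j = (k : ℚ)
    · obtain ⟨h01, h1, hm⟩ := hcond j h
      constructor
      · simp only [hτq, if_pos h]; linarith
      · simp only [hτq, if_pos h]; linarith
    · simp [hτq, if_neg h, hle j]
  have hfloor : ∀ j, ⌊τq j⌋ = ⌊η j⌋ := by
    intro j
    by_cases h : (j : ℕ) < s ∧ ∃ k : ℤ, η j = (k : ℚ)
    · obtain ⟨k, hk⟩ := h.2
      obtain ⟨h01, h1, hm⟩ := hcond j h
      rw [hk] at h01 h1 hm
      simp only [hτq, if_pos h, hk]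
      rw [Int.floor_intCast, Int.floor_eq_iff]
      constructor
      · linarith
      · push_cast; linarith
    · simp [hτq, if_neg h]
  have hnotint : ∀ j : Fin (r - 1), (j : ℕ) < s → ∀ k : ℤ, τq j ≠ (k : ℚ) := by
    intro j hj k hk
    by_cases h : ∃ k : ℤ, η j = (k : ℚ)
    · obtain ⟨k0, hk0⟩ := h
      have hd : (j : ℕ) < s ∧ ∃ k : ℤ, η j = (k : ℚ) := ⟨hj, k0, hk0⟩
      obtain ⟨h01, h1, hm⟩ := hcond j hd
      rw [hk0] at h01 h1 hm
      simp only [hτq, if_pos hd, hk0] at hk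
      have c1 : (k0 : ℚ) < (k : ℚ) := by linarith
      have c1' : k0 < k := by exact_mod_cast c1
      have c2 : (k0 : ℚ) + 1 ≤ (k : ℚ) := by exact_mod_cast c1'
      linarith
    · apply h
      refine ⟨k, ?_⟩
      have hns : ¬((j : ℕ) < s ∧ ∃ k : ℤ, η j = (k : ℚ)) := fun hc => h hc.2
      have : τq j = η j := by simp only [hτq, if_neg hns]
      rw [← this]; exact hk
  have hτeq : ∀ j : Fin (r - 1), s ≤ (j : ℕ) → τq j = η j := by
    intro j hj
    have hns : ¬((j : ℕ) < s ∧ ∃ k : ℤ, η j = (k : ℚ)) := fun hc => by omega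
    simp only [hτq, if_neg hns]
  constructor
  · -- membership
    refine ⟨fun j => ((τq j : ℚ) : ℝ), fun j => ⟨?_, ?_⟩, fun j hj k hk => ?_, ?_⟩
    · show (η j : ℝ) ≤ ((τq j : ℚ) : ℝ); exact_mod_cast (hbound j).1
    · show ((τq j : ℚ) : ℝ) ≤ (ζ j : ℝ); exact_mod_cast (hbound j).2
    · have hk2 : ((τq j : ℚ) : ℝ) = (((k : ℚ)) : ℝ) := by push_cast; exact hk
      exact hnotint j hj k (Rat.cast_injective (α := ℝ) hk2)
    · have hcard : Nat.card {j : Fin (r - 1) // s ≤ (j : ℕ) ∧ ∃ k : ℤ, ((τq j : ℚ) : ℝ) = (k : ℝ)}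
          = Nat.card {j : Fin (r - 1) // s ≤ (j : ℕ) ∧ ∃ k : ℤ, η j = (k : ℚ)} := by
        apply Nat.card_congr
        apply Equiv.subtypeEquivRight
        intro j
        constructor
        · rintro ⟨hj, k, hk⟩
          refine ⟨hj, k, ?_⟩
          rw [hτeq j hj] at hk; exact_mod_cast hk
        · rintro ⟨hj, k, hk⟩
          refine ⟨hj, k, ?_⟩
          rw [hτeq j hj, hk]; norm_num
      have hfl : ∀ j : Fin (r - 1), ⌊((τq j : ℚ) : ℝ)⌋ = ⌊η j⌋ := by
        intro j; rw [Rat.floor_cast]; exact hfloor j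
      simp only [hfl, hcard]
      ring
  · -- upper bound
    rintro b ⟨τ, hτb, hτni, rfl⟩
    have key : ∀ j : Fin (r - 1),
        -⌊τ j⌋ + (if s ≤ (j : ℕ) ∧ ∃ k : ℤ, τ j = (k : ℝ) then (1:ℤ) else 0)
        ≤ -⌊η j⌋ + (if s ≤ (j : ℕ) ∧ ∃ k : ℤ, η j = (k : ℚ) then (1:ℤ) else 0) := by
      intro j
      have hmono : ⌊η j⌋ ≤ ⌊τ j⌋ := by
        rw [← Rat.floor_cast (α := ℝ) (η j)]
        exact Int.floor_mono (hτb j).1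
      by_cases hjs : s ≤ (j : ℕ)
      · by_cases hti : ∃ k : ℤ, τ j = (k : ℝ)
        · obtain ⟨k, hk⟩ := hti
          by_cases heq : ⌊τ j⌋ = ⌊η j⌋
          · have hk' : ⌊τ j⌋ = k := by rw [hk]; exact Int.floor_intCast k
            have h1 : ((k : ℚ) : ℝ) ≤ ((η j : ℚ) : ℝ) := by
              have h1a : ((⌊η j⌋ : ℚ) : ℝ) ≤ ((η j : ℚ) : ℝ) := by
                exact_mod_cast Int.floor_le (η j)
              rw [← heq, hk'] at h1a
              exact_mod_cast h1a
            have h2 : ((η j : ℚ) : ℝ) ≤ ((k : ℚ) : ℝ) := by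
              have := (hτb j).1
              rw [hk] at this
              exact_mod_cast this
            have hηk : η j = (k : ℚ) := by
              have := le_antisymm h2 h1
              exact_mod_cast this
            rw [if_pos ⟨hjs, k, hk⟩, if_pos ⟨hjs, k, hηk⟩, heq]
          · have h1 : ⌊η j⌋ + 1 ≤ ⌊τ j⌋ := by omega
            rw [if_pos ⟨hjs, k, hk⟩]
            split <;> omega
        · have hn : ¬(s ≤ (j : ℕ) ∧ ∃ k : ℤ, τ j = (k : ℝ)) := fun hc => hti hc.2
          rw [if_neg hn]
          split <;> omega
      · have hn1 : ¬(s ≤ (j : ℕ) ∧ ∃ k : ℤ, τ j = (k : ℝ)) := fun hc => hjs hc.1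
        have hn2 : ¬(s ≤ (j : ℕ) ∧ ∃ k : ℤ, η j = (k : ℚ)) := fun hc => hjs hc.1
        rw [if_neg hn1, if_neg hn2]
        omega
    have hsum := card_sum_le _ _ _ _ key
    rw [Finset.sum_neg_distrib, Finset.sum_neg_distrib] at hsum
    linarith [hsum]
end

section
/- Let n ≥ 0, r ≥ 2 and 0 ≤ s ≤ r−1 be integers, and for 1 ≤ j ≤ r−1 let η_j ≤ ζ_j be rational numbers with η_j < ζ_j whenever 1 ≤ j ≤ s. For τ in the box T = ∏_{j=1}^{r−1}[η_j, ζ_j] set m₀(τ) = b₀(τ) + i₀(τ) − (n + r − 1) and m₁(τ) = b₀(τ) + s₀(τ) − 1. Then for each τ ∈ T with i₀(τ) > 0 there exists τ' ∈ T such that τ'_j = τ_j for all s+1 ≤ j ≤ r−1, i₀(τ') = 0, m₀(τ') ≤ m₀(τ) and m₁(τ') ≥ m₁(τ); in particular [m₀(τ), m₁(τ)] ⊆ [m₀(τ'), m₁(τ')]. -/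
/-- The reduction step in the proof of Theorem 2.2: for every `τ` in the box
`∏ [η_j, ζ_j]` with `i₀(τ) > 0` there is `τ'` in the box agreeing with `τ`
in the coordinates `s+1 ≤ j ≤ r-1`, with `i₀(τ') = 0` (i.e. `τ'_j ∉ ℤ` for
`1 ≤ j ≤ s`), `m₀(τ') ≤ m₀(τ)` and `m₁(τ') ≥ m₁(τ)`, where
`m₀(τ) = b₀(τ) + i₀(τ) - (n + r - 1)`, `m₁(τ) = b₀(τ) + s₀(τ) - 1`,
`b₀(τ) = -(⌊τ₁⌋ + ⋯ + ⌊τ_{r-1}⌋)`, `i₀(τ) = |{j ≤ s : τ_j ∈ ℤ}|` and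
`s₀(τ) = |{j > s : τ_j ∈ ℤ}|`. -/
theorem stmt3 (n r s : ℕ) (hr : 2 ≤ r) (hs : s ≤ r - 1)
    (η ζ : Fin (r - 1) → ℚ)
    (hle : ∀ j, η j ≤ ζ j)
    (hlt : ∀ j : Fin (r - 1), (j : ℕ) < s → η j < ζ j)
    (τ : Fin (r - 1) → ℝ)
    (hτ : ∀ j, (η j : ℝ) ≤ τ j ∧ τ j ≤ (ζ j : ℝ))
    (hi : 0 < Nat.card {j : Fin (r - 1) // (j : ℕ) < s ∧ ∃ k : ℤ, τ j = (k : ℝ)}) :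
    ∃ τ' : Fin (r - 1) → ℝ,
      (∀ j, (η j : ℝ) ≤ τ' j ∧ τ' j ≤ (ζ j : ℝ)) ∧
      (∀ j : Fin (r - 1), s ≤ (j : ℕ) → τ' j = τ j) ∧
      (∀ j : Fin (r - 1), (j : ℕ) < s → ∀ k : ℤ, τ' j ≠ (k : ℝ)) ∧
      (-(∑ j, ⌊τ' j⌋)
          + (Nat.card {j : Fin (r - 1) // (j : ℕ) < s ∧ ∃ k : ℤ, τ' j = (k : ℝ)} : ℤ)
          - (n + r - 1)
        ≤ -(∑ j, ⌊τ j⌋)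
          + (Nat.card {j : Fin (r - 1) // (j : ℕ) < s ∧ ∃ k : ℤ, τ j = (k : ℝ)} : ℤ)
          - (n + r - 1)) ∧
      (-(∑ j, ⌊τ j⌋)
          + (Nat.card {j : Fin (r - 1) // s ≤ (j : ℕ) ∧ ∃ k : ℤ, τ j = (k : ℝ)} : ℤ) - 1
        ≤ -(∑ j, ⌊τ' j⌋)
          + (Nat.card {j : Fin (r - 1) // s ≤ (j : ℕ) ∧ ∃ k : ℤ, τ' j = (k : ℝ)} : ℤ) - 1) := by
  classical
  set c : Fin (r - 1) → ℤ := fun j => ⌊τ j⌋ with hc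
  set P : Fin (r - 1) → Prop := fun j => (j : ℕ) < s ∧ ∃ k : ℤ, τ j = (k : ℝ) with hP
  set τ' : Fin (r - 1) → ℝ := fun j =>
    if P j then
      (if ((c j : ℝ) < (ζ j : ℝ)) then min (ζ j : ℝ) ((c j : ℝ) + 1/2)
       else max (η j : ℝ) ((c j : ℝ) - 1/2))
    else τ j with hτ'
  -- basic fact: if P j then τ j = c j
  have hPc : ∀ j, P j → τ j = (c j : ℝ) := by
    intro j hj
    obtain ⟨-, k, hk⟩ := hj
    have h : c j = k := by simp [hc, hk]
    rw [h]; exact hk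
  have key : ∀ j, P j →
      ((η j : ℝ) ≤ τ' j ∧ τ' j ≤ (ζ j : ℝ)) ∧ (∀ m : ℤ, τ' j ≠ (m : ℝ)) ∧
      c j - 1 ≤ ⌊τ' j⌋ ∧ ⌊τ' j⌋ ≤ c j := by
    intro j hj
    have htc := hPc j hj
    have hη : (η j : ℝ) ≤ (c j : ℝ) := htc ▸ (hτ j).1
    have hζ : (c j : ℝ) ≤ (ζ j : ℝ) := htc ▸ (hτ j).2
    have hτ'j : τ' j = if ((c j : ℝ) < (ζ j : ℝ)) then min (ζ j : ℝ) ((c j : ℝ) + 1/2)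
       else max (η j : ℝ) ((c j : ℝ) - 1/2) := by
      simp only [hτ', if_pos hj]
    by_cases hcase : (c j : ℝ) < (ζ j : ℝ)
    · rw [hτ'j, if_pos hcase]
      have h1 : (c j : ℝ) < min (ζ j : ℝ) ((c j : ℝ) + 1/2) := by
        apply lt_min hcase; linarith
      have h2 : min (ζ j : ℝ) ((c j : ℝ) + 1/2) ≤ (c j : ℝ) + 1/2 := min_le_right _ _
      refine ⟨⟨le_trans hη (le_of_lt h1), min_le_left _ _⟩, ?_, ?_, ?_⟩
      · intro m hm
        have hm1 : (c j : ℝ) < (m : ℝ) := hm ▸ h1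
        have hm2 : (m : ℝ) < (c j : ℝ) + 1 := by rw [← hm]; linarith
        have e1 : c j < m := by exact_mod_cast hm1
        have e2 : m < c j + 1 := by exact_mod_cast (show (m : ℝ) < ((c j + 1 : ℤ) : ℝ) by push_cast; linarith)
        omega
      · rw [Int.le_floor]; push_cast; linarith
      · have : ⌊min (ζ j : ℝ) ((c j : ℝ) + 1/2)⌋ < c j + 1 := by
          rw [Int.floor_lt]; push_cast; linarith
        omega
    · have hceq : (c j : ℝ) = (ζ j : ℝ) := le_antisymm hζ (not_lt.mp hcase)
      have hηζ : (η j : ℝ) < (ζ j : ℝ) := by exact_mod_cast hlt j hj.1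
      rw [hτ'j, if_neg hcase]
      have h1 : max (η j : ℝ) ((c j : ℝ) - 1/2) < (c j : ℝ) := by
        exact max_lt (by linarith) (by linarith)
      have h2 : (c j : ℝ) - 1/2 ≤ max (η j : ℝ) ((c j : ℝ) - 1/2) := le_max_right _ _
      refine ⟨⟨le_max_left _ _, by linarith⟩, ?_, ?_, ?_⟩
      · intro m hm
        have hm1 : (m : ℝ) < (c j : ℝ) := hm ▸ h1
        have hm2 : (c j : ℝ) - 1 < (m : ℝ) := by rw [← hm]; linarith
        have e1 : m < c j := by exact_mod_cast hm1
        have e2 : c j - 1 < m := by exact_mod_cast (show ((c j - 1 : ℤ) : ℝ) < (m : ℝ) by push_cast; linarith)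
        omega
      · rw [Int.le_floor]; push_cast; linarith
      · have : ⌊max (η j : ℝ) ((c j : ℝ) - 1/2)⌋ < c j := by
          rw [Int.floor_lt]; exact h1
        omega
  have heq : ∀ j, ¬ P j → τ' j = τ j := by
    intro j hj; simp only [hτ', if_neg hj]
  -- property: τ' j not integer for j < s
  have hnoint : ∀ j : Fin (r - 1), (j : ℕ) < s → ∀ k : ℤ, τ' j ≠ (k : ℝ) := by
    intro j hjs k hk
    by_cases hj : P j
    · exact (key j hj).2.1 k hk
    · exact hj ⟨hjs, k, (heq j hj) ▸ hk⟩
  have hagree : ∀ j : Fin (r - 1), s ≤ (j : ℕ) → τ' j = τ j := by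
    intro j hjs
    apply heq
    intro hPj; omega
  have hbox : ∀ j, (η j : ℝ) ≤ τ' j ∧ τ' j ≤ (ζ j : ℝ) := by
    intro j
    by_cases hj : P j
    · exact (key j hj).1
    · rw [heq j hj]; exact hτ j
  -- floor bounds for all j
  have hfl : ∀ j, ⌊τ' j⌋ ≤ ⌊τ j⌋ ∧ ⌊τ j⌋ - (if P j then 1 else 0) ≤ ⌊τ' j⌋ := by
    intro j
    by_cases hj : P j
    · have := (key j hj).2.2
      rw [if_pos hj]; exact ⟨this.2, this.1⟩
    · rw [heq j hj, if_neg hj]; omega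
  -- cards
  have hcard0 : Nat.card {j : Fin (r - 1) // (j : ℕ) < s ∧ ∃ k : ℤ, τ' j = (k : ℝ)} = 0 := by
    have : IsEmpty {j : Fin (r - 1) // (j : ℕ) < s ∧ ∃ k : ℤ, τ' j = (k : ℝ)} := by
      constructor
      rintro ⟨j, hjs, k, hk⟩
      exact hnoint j hjs k hk
    exact Nat.card_of_isEmpty
  have hcards : Nat.card {j : Fin (r - 1) // s ≤ (j : ℕ) ∧ ∃ k : ℤ, τ j = (k : ℝ)}
      = Nat.card {j : Fin (r - 1) // s ≤ (j : ℕ) ∧ ∃ k : ℤ, τ' j = (k : ℝ)} := by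
    apply Nat.card_congr
    apply Equiv.subtypeEquivRight
    intro j
    constructor
    · rintro ⟨hjs, k, hk⟩; exact ⟨hjs, k, (hagree j hjs) ▸ hk⟩
    · rintro ⟨hjs, k, hk⟩; exact ⟨hjs, k, (hagree j hjs) ▸ hk⟩
  have hcardP : (Nat.card {j : Fin (r - 1) // (j : ℕ) < s ∧ ∃ k : ℤ, τ j = (k : ℝ)} : ℤ)
      = ∑ j, (if P j then (1 : ℤ) else 0) := by
    have : {j : Fin (r - 1) // (j : ℕ) < s ∧ ∃ k : ℤ, τ j = (k : ℝ)} = Subtype P := rfl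
    rw [this, Nat.card_eq_fintype_card, Fintype.card_subtype, Finset.sum_boole]
  refine ⟨τ', hbox, hagree, hnoint, ?_, ?_⟩
  · have hsum : ∑ j, ⌊τ j⌋ - (∑ j, (if P j then (1 : ℤ) else 0)) ≤ ∑ j, ⌊τ' j⌋ := by
      rw [← Finset.sum_sub_distrib]
      exact Finset.sum_le_sum fun j _ => (hfl j).2
    rw [hcard0, hcardP]
    push_cast
    linarith
  · have hsum : ∑ j, ⌊τ' j⌋ ≤ ∑ j, ⌊τ j⌋ :=
      Finset.sum_le_sum fun j _ => (hfl j).1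
    rw [← hcards]
    linarith
end

section
/- Let N ≥ 2 be an integer and let a ≤ b be real numbers. For x ∈ ℝ let χ(x) = 1 if x ∈ ℤ and χ(x) = 0 otherwise. Then the union over x ∈ [a, b] of the closed real intervals [−⌊x⌋ − N, −⌊x⌋ + χ(x) − 1] equals the closed interval [−⌊b⌋ − N, −⌊a⌋ + χ(a) − 1]. -/
open Classical

lemma stmt4_endpoint (x : ℝ) :
    -(⌊x⌋ : ℝ) + (if ∃ k : ℤ, x = (k : ℝ) then (1 : ℝ) else 0) - 1 = -(⌈x⌉ : ℝ) := by
  by_cases h : ∃ k : ℤ, x = (k : ℝ)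
  · obtain ⟨k, rfl⟩ := h
    simp [if_pos]
  · rw [if_neg h]
    have h1 : ⌈x⌉ ≤ ⌊x⌋ + 1 := Int.ceil_le_floor_add_one x
    have h2 : ⌊x⌋ + 1 ≤ ⌈x⌉ := by
      rw [Int.add_one_le_iff, Int.lt_ceil]
      rcases lt_or_eq_of_le (Int.floor_le x) with h' | h'
      · exact h'
      · exact absurd ⟨⌊x⌋, h'.symm⟩ h
    have : ⌈x⌉ = ⌊x⌋ + 1 := le_antisymm h1 h2
    rw [this]
    push_cast
    ring

/-- The one-variable connectivity claim used in Case 2 of the proof of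
Theorem 2.2 (index not in `J`): for an integer `N ≥ 2` and reals `a ≤ b`,
the union over `x ∈ [a, b]` of the intervals `[-⌊x⌋ - N, -⌊x⌋ + χ(x) - 1]`,
where `χ(x) = 1` if `x ∈ ℤ` and `χ(x) = 0` otherwise, equals the closed
interval `[-⌊b⌋ - N, -⌊a⌋ + χ(a) - 1]`. -/
theorem stmt4 (N : ℤ) (hN : 2 ≤ N) (a b : ℝ) (hab : a ≤ b) :
    {y : ℝ | ∃ x ∈ Set.Icc a b,
        y ∈ Set.Icc (-(⌊x⌋ : ℝ) - N)
          (-(⌊x⌋ : ℝ) + (if ∃ k : ℤ, x = (k : ℝ) then (1 : ℝ) else 0) - 1)}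
    = Set.Icc (-(⌊b⌋ : ℝ) - N)
        (-(⌊a⌋ : ℝ) + (if ∃ k : ℤ, a = (k : ℝ) then (1 : ℝ) else 0) - 1) := by
  ext y
  simp only [Set.mem_setOf_eq, stmt4_endpoint, Set.mem_Icc]
  constructor
  · rintro ⟨x, ⟨hax, hxb⟩, h1, h2⟩
    have hfl : (⌊x⌋ : ℝ) ≤ (⌊b⌋ : ℝ) := by exact_mod_cast Int.floor_le_floor hxb
    have hcl : (⌈a⌉ : ℝ) ≤ (⌈x⌉ : ℝ) := by exact_mod_cast Int.ceil_le_ceil hax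
    constructor <;> linarith
  · rintro ⟨h1, h2⟩
    by_cases hca : -(⌊a⌋ : ℝ) - N ≤ y
    · exact ⟨a, ⟨le_refl a, hab⟩, hca, h2⟩
    · push_neg at hca
      -- take x = m := ⌈-y - N⌉
      set m : ℤ := ⌈-y - (N : ℝ)⌉ with hm
      have hmy : -y - (N : ℝ) ≤ (m : ℝ) := Int.le_ceil _
      have hmlt : (m : ℝ) < -y - (N : ℝ) + 1 := Int.ceil_lt_add_one _
      have hNr : (2 : ℝ) ≤ (N : ℝ) := by exact_mod_cast hN
      have ham : a ≤ (m : ℝ) := by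
        have : (⌊a⌋ : ℝ) < -y - (N : ℝ) := by linarith
        have h3 : ⌊a⌋ + 1 ≤ m := by
          rw [hm, Int.add_one_le_iff, Int.lt_ceil]; exact this
        have h4 : a < (⌊a⌋ : ℝ) + 1 := Int.lt_floor_add_one a
        have : ((⌊a⌋ + 1 : ℤ) : ℝ) ≤ (m : ℝ) := by exact_mod_cast h3
        push_cast at this
        linarith
      have hmb : (m : ℝ) ≤ b := by
        have h3 : -y - (N : ℝ) ≤ (⌊b⌋ : ℝ) := by linarith
        have h4 : m ≤ ⌊b⌋ := by
          rw [hm]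
          exact Int.ceil_le.mpr h3
        have : (m : ℝ) ≤ (⌊b⌋ : ℝ) := by exact_mod_cast h4
        linarith [Int.floor_le b]
      refine ⟨(m : ℝ), ⟨ham, hmb⟩, ?_, ?_⟩
      · rw [Int.floor_intCast]; linarith
      · rw [Int.ceil_intCast]; linarith
end

section
/- Let N ≥ 2 be an integer and let a < b be real numbers. For x ∈ ℝ let χ(x) = 1 if x ∈ ℤ and χ(x) = 0 otherwise. Then the union over x ∈ [a, b] with x ∉ ℤ of the closed real intervals [−⌊x⌋ − N, −⌊x⌋ − 1] equals the closed interval [χ(b) − ⌊b⌋ − N, −⌊a⌋ − 1]. -/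
open Classical

/-- For every integer `m` with `⌊a⌋ ≤ m ≤ ⌊b⌋` (and `m < ⌊b⌋` if `b` is an
integer), there is a non-integer `x ∈ [a, b]` with `⌊x⌋ = m`. -/
lemma aux_exists5 (a b : ℝ) (hab : a < b) (m : ℤ) (h1 : ⌊a⌋ ≤ m)
    (h2 : m ≤ ⌊b⌋) (h3 : (∃ k : ℤ, b = (k : ℝ)) → m < ⌊b⌋) :
    ∃ x ∈ Set.Icc a b, (∀ k : ℤ, x ≠ (k : ℝ)) ∧ ⌊x⌋ = m := by
  have noInt : ∀ x : ℝ, ⌊x⌋ = m → x ≠ (m : ℝ) → ∀ k : ℤ, x ≠ (k : ℝ) := by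
    intro x hf hne k hxk
    apply hne
    rw [hxk] at hf ⊢
    rw [Int.floor_intCast] at hf
    exact_mod_cast hf
  by_cases hma : m = ⌊a⌋
  · by_cases ha : ∃ k : ℤ, a = (k : ℝ)
    · obtain ⟨k, rfl⟩ := ha
      have hfa : ⌊(k : ℝ)⌋ = k := Int.floor_intCast k
      have hmk : m = k := by rw [hma, hfa]
      set x : ℝ := (k : ℝ) + min 1 (b - k) / 2 with hxdef
      have h0 : 0 < min 1 (b - (k : ℝ)) := lt_min one_pos (by linarith)
      have hle1 : min 1 (b - (k : ℝ)) ≤ 1 := min_le_left _ _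
      have hlebk : min 1 (b - (k : ℝ)) ≤ b - k := min_le_right _ _
      have hx1 : (k : ℝ) < x := by rw [hxdef]; linarith
      have hx2 : x < (k : ℝ) + 1 := by rw [hxdef]; linarith
      have hxb : x ≤ b := by rw [hxdef]; linarith
      have hfx : ⌊x⌋ = k := by
        rw [Int.floor_eq_iff]
        · exact ⟨le_of_lt hx1, by exact_mod_cast hx2⟩
      refine ⟨x, ⟨le_of_lt hx1, hxb⟩, ?_, by rw [hfx, hmk]⟩
      apply noInt x (by rw [hfx, hmk])
      rw [hmk]; exact ne_of_gt hx1
    · exact ⟨a, ⟨le_refl a, le_of_lt hab⟩, fun k hk => ha ⟨k, hk⟩, hma.symm⟩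
  · by_cases hmb : m = ⌊b⌋
    · have hb : ¬∃ k : ℤ, b = (k : ℝ) := fun h => absurd (h3 h) (by omega)
      exact ⟨b, ⟨le_of_lt hab, le_refl b⟩, fun k hk => hb ⟨k, hk⟩, hmb.symm⟩
    · have hm1 : m + 1 ≤ ⌊b⌋ := by
        have := lt_of_le_of_ne h2 hmb; omega
      have hma1 : ⌊a⌋ + 1 ≤ m := by
        have := lt_of_le_of_ne h1 (Ne.symm hma); omega
      have hfa : a < (⌊a⌋ : ℝ) + 1 := Int.lt_floor_add_one a
      have hma1' : ((⌊a⌋ : ℝ) + 1) ≤ (m : ℝ) := by exact_mod_cast hma1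
      have hm1' : (m : ℝ) + 1 ≤ (⌊b⌋ : ℝ) := by exact_mod_cast hm1
      have hfb : (⌊b⌋ : ℝ) ≤ b := Int.floor_le b
      set x : ℝ := (m : ℝ) + 1 / 2 with hxdef
      have hfx : ⌊x⌋ = m := by
        rw [Int.floor_eq_iff]
        constructor
        · rw [hxdef]; linarith
        · rw [hxdef]; push_cast; linarith
      refine ⟨x, ⟨by rw [hxdef]; linarith, by rw [hxdef]; linarith⟩, ?_, hfx⟩
      apply noInt x hfx
      rw [hxdef]; intro h; linarith [h]
      -- x = m + 1/2 ≠ m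

/-- The one-variable connectivity claim used in Case 2 of the proof of
Theorem 2.2 (index in `J`, so integer values excluded): for an integer
`N ≥ 2` and reals `a < b`, the union over non-integer `x ∈ [a, b]` of the
intervals `[-⌊x⌋ - N, -⌊x⌋ - 1]` equals the closed interval
`[χ(b) - ⌊b⌋ - N, -⌊a⌋ - 1]`, where `χ(x) = 1` if `x ∈ ℤ` and `χ(x) = 0`
otherwise. -/
theorem stmt5 (N : ℤ) (hN : 2 ≤ N) (a b : ℝ) (hab : a < b) :
    {y : ℝ | ∃ x ∈ Set.Icc a b, (∀ k : ℤ, x ≠ (k : ℝ)) ∧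
        y ∈ Set.Icc (-(⌊x⌋ : ℝ) - N) (-(⌊x⌋ : ℝ) - 1)}
    = Set.Icc ((if ∃ k : ℤ, b = (k : ℝ) then (1 : ℝ) else 0) - (⌊b⌋ : ℝ) - N)
        (-(⌊a⌋ : ℝ) - 1) := by
  have hN' : (2 : ℝ) ≤ (N : ℝ) := by exact_mod_cast hN
  by_cases hb : ∃ k : ℤ, b = (k : ℝ)
  · obtain ⟨kb, hkb⟩ := hb
    have hfb : ⌊b⌋ = kb := by rw [hkb, Int.floor_intCast]
    have hbInt : ∃ k : ℤ, b = (k : ℝ) := ⟨kb, hkb⟩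
    simp only [if_pos hbInt]
    ext y
    simp only [Set.mem_setOf_eq, Set.mem_Icc]
    constructor
    · rintro ⟨x, ⟨hxa, hxb⟩, hni, hy1, hy2⟩
      have hfa : ⌊a⌋ ≤ ⌊x⌋ := Int.floor_le_floor hxa
      have hxlt : x < b := lt_of_le_of_ne hxb (by rw [hkb]; exact hni kb)
      have hfx : ⌊x⌋ < kb := Int.floor_lt.mpr (by rw [← hkb]; exact hxlt)
      have hfx' : (⌊x⌋ : ℝ) ≤ (kb : ℝ) - 1 := by
        have : ⌊x⌋ ≤ kb - 1 := by omega
        push_cast; exact_mod_cast this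
      have hfa' : (⌊a⌋ : ℝ) ≤ (⌊x⌋ : ℝ) := by exact_mod_cast hfa
      rw [hfb]
      constructor <;> push_cast <;> linarith
    · intro ⟨hy1, hy2⟩
      rw [hfb] at hy1
      -- choose m = min ⌊-y-1⌋ (kb - 1)
      set u : ℤ := ⌊-y - 1⌋ with hu
      have hau : ⌊a⌋ ≤ u := Int.le_floor.mpr (by push_cast; linarith)
      have hav : ⌊a⌋ ≤ kb - 1 := by
        have h : ⌊a⌋ < kb := by
          apply Int.floor_lt.mpr
          rw [← hkb]
          exact hab
        omega
      set m : ℤ := min u (kb - 1) with hm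
      have hm1 : ⌊a⌋ ≤ m := le_min hau hav
      have hm2 : m ≤ ⌊b⌋ := by rw [hfb]; omega
      have hm3 : (∃ k : ℤ, b = (k : ℝ)) → m < ⌊b⌋ := fun _ => by
        rw [hfb]; omega
      obtain ⟨x, hx, hni, hfx⟩ := aux_exists5 a b hab m hm1 hm2 hm3
      refine ⟨x, hx, hni, ?_, ?_⟩
      · rw [hfx]
        rcases le_total u (kb - 1) with h | h
        · have hmu : m = u := min_eq_left h
          have : (-y - 1 : ℝ) < (u : ℝ) + 1 := Int.lt_floor_add_one _
          rw [hmu]; linarith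
        · have hmv : m = kb - 1 := min_eq_right h
          rw [hmv]; push_cast; linarith
      · rw [hfx]
        have hmu : m ≤ u := min_le_left _ _
        have : (u : ℝ) ≤ -y - 1 := Int.floor_le _
        have hmu' : (m : ℝ) ≤ (u : ℝ) := by exact_mod_cast hmu
        linarith
  · simp only [if_neg hb]
    ext y
    simp only [Set.mem_setOf_eq, Set.mem_Icc]
    constructor
    · rintro ⟨x, ⟨hxa, hxb⟩, hni, hy1, hy2⟩
      have hfa : (⌊a⌋ : ℝ) ≤ (⌊x⌋ : ℝ) := by
        exact_mod_cast Int.floor_le_floor hxa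
      have hfb : (⌊x⌋ : ℝ) ≤ (⌊b⌋ : ℝ) := by
        exact_mod_cast Int.floor_le_floor hxb
      constructor <;> linarith
    · intro ⟨hy1, hy2⟩
      set u : ℤ := ⌊-y - 1⌋ with hu
      have hau : ⌊a⌋ ≤ u := Int.le_floor.mpr (by push_cast; linarith)
      have hav : ⌊a⌋ ≤ ⌊b⌋ := Int.floor_le_floor (le_of_lt hab)
      set m : ℤ := min u ⌊b⌋ with hm
      have hm1 : ⌊a⌋ ≤ m := le_min hau hav
      have hm2 : m ≤ ⌊b⌋ := min_le_right _ _
      have hm3 : (∃ k : ℤ, b = (k : ℝ)) → m < ⌊b⌋ := fun h => absurd h hb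
      obtain ⟨x, hx, hni, hfx⟩ := aux_exists5 a b hab m hm1 hm2 hm3
      refine ⟨x, hx, hni, ?_, ?_⟩
      · rw [hfx]
        rcases le_total u ⌊b⌋ with h | h
        · have hmu : m = u := min_eq_left h
          have : (-y - 1 : ℝ) < (u : ℝ) + 1 := Int.lt_floor_add_one _
          rw [hmu]; linarith
        · have hmv : m = ⌊b⌋ := min_eq_right h
          rw [hmv]; linarith
      · rw [hfx]
        have hmu : m ≤ u := min_le_left _ _
        have : (u : ℝ) ≤ -y - 1 := Int.floor_le _
        have hmu' : (m : ℝ) ≤ (u : ℝ) := by exact_mod_cast hmu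
        linarith
end

section
/- Let G be a subgroup of SL(2,ℝ) such that every element A ∈ G satisfies either A ∈ {I, −I} or |tr A| < 2 (i.e. every non-central element of G is elliptic). Then there is a point z of the upper half-plane ℍ that is fixed by every element of G under the Möbius action A·z = (az + b)/(cz + d) for A = [[a, b], [c, d]]. -/
open Matrix UpperHalfPlane Complex
local notation "SL2" => Matrix.SpecialLinearGroup (Fin 2) ℝ

lemma detE (A : SL2) : (A : Matrix (Fin 2) (Fin 2) ℝ) 0 0 * A 1 1 - A 0 1 * A 1 0 = 1 := by
  have := A.prop
  rwa [Matrix.det_fin_two] at this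

lemma den_ne {c d : ℝ} {z : ℂ} (hz : z.im ≠ 0) (h : ¬(c = 0 ∧ d = 0)) :
    (c : ℂ) * z + d ≠ 0 := by
  intro h0
  have h1 : c * z.im = 0 := by
    have := congrArg Complex.im h0; simpa using this
  rcases mul_eq_zero.mp h1 with hc | hzi
  · subst hc
    have h2 : (d : ℝ) = 0 := by
      have := congrArg Complex.re h0; simpa using this
    exact h ⟨rfl, h2⟩
  · exact hz hzi

lemma smul_eq_iff (A : SL2) (w v : ℍ) :
    A • w = v ↔
      (((A : Matrix (Fin 2) (Fin 2) ℝ) 0 0 : ℂ) * (w : ℂ)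
          + ((A : Matrix (Fin 2) (Fin 2) ℝ) 0 1 : ℂ)) /
        (((A : Matrix (Fin 2) (Fin 2) ℝ) 1 0 : ℂ) * (w : ℂ)
          + ((A : Matrix (Fin 2) (Fin 2) ℝ) 1 1 : ℂ)) = (v : ℂ) := by
  rw [← UpperHalfPlane.ext_iff', UpperHalfPlane.specialLinearGroup_apply, UpperHalfPlane.coe_mk]
  simp

lemma fix_iff (A : SL2) (w : ℍ) :
    A • w = w ↔
      (((A : Matrix (Fin 2) (Fin 2) ℝ) 0 0 : ℂ) * (w : ℂ)
          + ((A : Matrix (Fin 2) (Fin 2) ℝ) 0 1 : ℂ)) /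
        (((A : Matrix (Fin 2) (Fin 2) ℝ) 1 0 : ℂ) * (w : ℂ)
          + ((A : Matrix (Fin 2) (Fin 2) ℝ) 1 1 : ℂ)) = (w : ℂ) := by
  rw [← UpperHalfPlane.ext_iff', UpperHalfPlane.specialLinearGroup_apply, UpperHalfPlane.coe_mk]
  simp

noncomputable def iH : ℍ := ⟨Complex.I, by norm_num⟩

lemma iH_coe : (iH : ℂ) = Complex.I := rfl

lemma notboth (P : SL2) : ¬((P : Matrix (Fin 2) (Fin 2) ℝ) 1 0 = 0 ∧
    (P : Matrix (Fin 2) (Fin 2) ℝ) 1 1 = 0) := by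
  rintro ⟨h1, h2⟩
  have := detE P
  rw [h1, h2] at this
  norm_num at this

lemma fixI_entries (P : SL2) (h : P • iH = iH) :
    (P : Matrix (Fin 2) (Fin 2) ℝ) 1 1 = P 0 0 ∧
      (P : Matrix (Fin 2) (Fin 2) ℝ) 1 0 = -(P 0 1) := by
  rw [fix_iff, iH_coe] at h
  have hden : ((P : Matrix (Fin 2) (Fin 2) ℝ) 1 0 : ℂ) * Complex.I + (P 1 1 : ℂ) ≠ 0 :=
    den_ne (by simp) (notboth P)
  rw [div_eq_iff hden] at h
  have hre := congrArg Complex.re h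
  have him := congrArg Complex.im h
  simp at hre him
  constructor
  · linarith
  · linarith

lemma fixI_of (P : SL2) (h1 : (P : Matrix (Fin 2) (Fin 2) ℝ) 1 1 = P 0 0)
    (h2 : (P : Matrix (Fin 2) (Fin 2) ℝ) 1 0 = -(P 0 1)) : P • iH = iH := by
  rw [fix_iff, iH_coe]
  have hden : ((P : Matrix (Fin 2) (Fin 2) ℝ) 1 0 : ℂ) * Complex.I + (P 1 1 : ℂ) ≠ 0 :=
    den_ne (by simp) (notboth P)
  rw [div_eq_iff hden, h1, h2]
  push_cast
  linear_combination ((P : Matrix (Fin 2) (Fin 2) ℝ) 0 1 : ℂ) * Complex.I_sq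

lemma trace_conj (M X : SL2) :
    Matrix.trace ((M⁻¹ * X * M : SL2) : Matrix (Fin 2) (Fin 2) ℝ)
      = Matrix.trace (X : Matrix (Fin 2) (Fin 2) ℝ) := by
  have h : ((M⁻¹ * X * M : SL2) : Matrix (Fin 2) (Fin 2) ℝ)
      = (M⁻¹ : SL2) * ((X : Matrix (Fin 2) (Fin 2) ℝ) * M) := by
    simp [Matrix.SpecialLinearGroup.coe_mul, mul_assoc]
  rw [h, Matrix.trace_mul_comm]
  simp only [Matrix.SpecialLinearGroup.coe_inv]
  rw [mul_assoc, Matrix.mul_adjugate, M.prop, one_smul, mul_one]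

lemma inv_entries (A : SL2) :
    ((A⁻¹ : SL2) : Matrix (Fin 2) (Fin 2) ℝ) = !![A 1 1, -(A 0 1); -(A 1 0), A 0 0] := by
  rw [Matrix.SpecialLinearGroup.SL2_inv_expl]
  ext i j
  fin_cases i <;> fin_cases j <;> simp

lemma comm_trace (P R : SL2) (hx : (R : Matrix (Fin 2) (Fin 2) ℝ) 1 1 = R 0 0)
    (hy : (R : Matrix (Fin 2) (Fin 2) ℝ) 1 0 = -(R 0 1)) :
    Matrix.trace ((P * R * P⁻¹ * R⁻¹ : SL2) : Matrix (Fin 2) (Fin 2) ℝ)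
      = 2 + ((R : Matrix (Fin 2) (Fin 2) ℝ) 0 1) ^ 2
          * ((P 0 0 - P 1 1) ^ 2 + (P 0 1 + P 1 0) ^ 2) := by
  have hdP := detE P
  have hdR := detE R
  rw [hx, hy] at hdR
  have e : ((P * R * P⁻¹ * R⁻¹ : SL2) : Matrix (Fin 2) (Fin 2) ℝ)
      = (P : Matrix (Fin 2) (Fin 2) ℝ) * R * (P⁻¹ : SL2) * (R⁻¹ : SL2) := by
    simp [Matrix.SpecialLinearGroup.coe_mul]
  rw [e, inv_entries, inv_entries, hx, hy]
  rw [Matrix.trace_fin_two]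
  simp only [Matrix.mul_apply, Fin.sum_univ_two, Matrix.cons_val', Matrix.cons_val_zero,
    Matrix.cons_val_one, Matrix.head_cons, Matrix.head_fin_const, Matrix.of_apply,
    Matrix.empty_val', Matrix.cons_val_fin_one]
  simp only [hx, hy]
  linear_combination (2 : ℝ) * hdP
    + (2 * (P : Matrix (Fin 2) (Fin 2) ℝ) 0 0 * P 1 1 - 2 * P 0 1 * P 1 0) * hdR

set_option maxHeartbeats 4000000 in
/-- A subgroup of `SL(2, ℝ)` all of whose non-central elements are elliptic
(`|tr| < 2`) has a common fixed point in the upper half-plane under the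
Möbius action `A · z = (az + b) / (cz + d)`. -/
theorem stmt14 (G : Subgroup (Matrix.SpecialLinearGroup (Fin 2) ℝ))
    (hG : ∀ A ∈ G, (A : Matrix (Fin 2) (Fin 2) ℝ) = 1 ∨
      (A : Matrix (Fin 2) (Fin 2) ℝ) = -1 ∨
      |Matrix.trace (A : Matrix (Fin 2) (Fin 2) ℝ)| < 2) :
    ∃ z : ℂ, 0 < z.im ∧ ∀ A ∈ G,
      (((A : Matrix (Fin 2) (Fin 2) ℝ) 0 0 : ℂ) * z
          + ((A : Matrix (Fin 2) (Fin 2) ℝ) 0 1 : ℂ)) /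
        (((A : Matrix (Fin 2) (Fin 2) ℝ) 1 0 : ℂ) * z
          + ((A : Matrix (Fin 2) (Fin 2) ℝ) 1 1 : ℂ)) = z := by
  by_cases hall : ∀ A ∈ G, (A : Matrix (Fin 2) (Fin 2) ℝ) = 1 ∨
      (A : Matrix (Fin 2) (Fin 2) ℝ) = -1
  · refine ⟨Complex.I, by norm_num, ?_⟩
    intro A hA
    rcases hall A hA with h | h <;> rw [h] <;>
      norm_num [Matrix.one_apply, Matrix.neg_apply]
  · push_neg at hall
    obtain ⟨A₀, hA₀G, hA₀1, hA₀2⟩ := hall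
    have hell : |Matrix.trace ((A₀ : SL2) : Matrix (Fin 2) (Fin 2) ℝ)| < 2 :=
      ((hG A₀ hA₀G).resolve_left hA₀1).resolve_left hA₀2
    set a := (A₀ : Matrix (Fin 2) (Fin 2) ℝ) 0 0 with ha
    set b := (A₀ : Matrix (Fin 2) (Fin 2) ℝ) 0 1 with hb
    set c := (A₀ : Matrix (Fin 2) (Fin 2) ℝ) 1 0 with hcdef
    set d := (A₀ : Matrix (Fin 2) (Fin 2) ℝ) 1 1 with hd
    have hdet : a * d - b * c = 1 := detE A₀
    have htr : |a + d| < 2 := by rwa [Matrix.trace_fin_two] at hell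
    have htr2 : (a + d) ^ 2 < 4 := by
      rcases abs_lt.mp htr with ⟨h1, h2⟩; nlinarith
    have hc : c ≠ 0 := by
      intro h0
      rw [h0] at hdet
      nlinarith [sq_nonneg (a - d)]
    have hΔ : 0 < 4 - (a + d) ^ 2 := by linarith
    set e := Real.sqrt (4 - (a + d) ^ 2) with hedef
    have he2 : e ^ 2 = 4 - (a + d) ^ 2 := Real.sq_sqrt hΔ.le
    have he0 : 0 < e := Real.sqrt_pos.mpr hΔ
    set x0 : ℝ := (a - d) / (2 * c) with hx0
    set y0 : ℝ := e / (2 * |c|) with hy0def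
    have hy0 : 0 < y0 := by
      apply div_pos he0
      positivity
    have hcy : 4 * c ^ 2 * y0 ^ 2 = 4 - (a + d) ^ 2 := by
      rw [hy0def, div_pow]
      rw [← he2]
      have : |c| ^ 2 = c ^ 2 := sq_abs c
      field_simp
      ring_nf
      rw [this]
    set z0 : ℂ := (x0 : ℂ) + (y0 : ℂ) * Complex.I with hz0
    have hz0im : z0.im = y0 := by simp [hz0]
    have hz0re : z0.re = x0 := by simp [hz0]
    set w : ℍ := ⟨z0, by rw [hz0im]; exact hy0⟩ with hw
    have hwcoe : (w : ℂ) = z0 := rfl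
    -- A₀ fixes w
    have hA₀w : A₀ • w = w := by
      rw [fix_iff, hwcoe, ← ha, ← hb, ← hcdef, ← hd]
      have hden : (c : ℂ) * z0 + (d : ℂ) ≠ 0 := by
        apply den_ne (by rw [hz0im]; exact hy0.ne') (by tauto)
      rw [div_eq_iff hden, hz0]
      have h1 : 2 * c * x0 = a - d := by rw [hx0]; field_simp
      have hre4 : 4 * c ^ 2 * (a * x0 + b - c * x0 ^ 2 + c * y0 ^ 2 - d * x0) = 0 := by
        linear_combination (a * c - c * d - 2 * c ^ 2 * x0) * h1 + c * hcy - 4 * c * hdet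
      have hre : a * x0 + b - c * x0 ^ 2 + c * y0 ^ 2 - d * x0 = 0 := by
        have h4 : (4 : ℝ) * c ^ 2 ≠ 0 := by positivity
        have := mul_eq_zero.mp hre4
        tauto
      have him : a * y0 - 2 * c * x0 * y0 - d * y0 = 0 := by
        linear_combination (-y0) * h1
      have hreC : (a : ℂ) * x0 + b - c * x0 ^ 2 + c * y0 ^ 2 - d * x0 = 0 := by
        exact_mod_cast congrArg (Complex.ofReal) hre
      have himC : (a : ℂ) * y0 - 2 * c * x0 * y0 - d * y0 = 0 := by
        exact_mod_cast congrArg (Complex.ofReal) him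
      linear_combination hreC + Complex.I * himC + (-(c : ℂ) * (y0 : ℂ) ^ 2) * Complex.I_sq
    -- the conjugating matrix M
    set u : ℝ := Real.sqrt y0 with hu
    have hu0 : 0 < u := Real.sqrt_pos.mpr hy0
    have hu2 : u * u = y0 := Real.mul_self_sqrt hy0.le
    set M : SL2 := ⟨!![u, x0 / u; 0, u⁻¹], by
      rw [Matrix.det_fin_two_of]; field_simp; simp⟩ with hM
    have hM00 : (M : Matrix (Fin 2) (Fin 2) ℝ) 0 0 = u := rfl
    have hM01 : (M : Matrix (Fin 2) (Fin 2) ℝ) 0 1 = x0 / u := rfl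
    have hM10 : (M : Matrix (Fin 2) (Fin 2) ℝ) 1 0 = 0 := rfl
    have hM11 : (M : Matrix (Fin 2) (Fin 2) ℝ) 1 1 = u⁻¹ := rfl
    have hMI : M • iH = w := by
      rw [smul_eq_iff, iH_coe, hwcoe, hM00, hM01, hM10, hM11, hz0]
      have hu0' : (u : ℂ) ≠ 0 := by exact_mod_cast hu0.ne'
      have hu2C : (u : ℂ) * u = y0 := by exact_mod_cast hu2
      rw [div_eq_iff (by push_cast; field_simp; simp [hu0'])]
      push_cast
      field_simp
      linear_combination Complex.I * hu2C
    clear_value M w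
    refine ⟨(w : ℂ), w.2, ?_⟩
    intro B hB
    rw [← fix_iff B w]
    -- reduce to showing B' fixes i
    set B' : SL2 := M⁻¹ * B * M with hB'
    set A' : SL2 := M⁻¹ * A₀ * M with hA'
    have hA'I : A' • iH = iH := by
      rw [hA', mul_smul, mul_smul, hMI, hA₀w, ← hMI, inv_smul_smul]
    obtain ⟨hx', hy'⟩ := fixI_entries A' hA'I
    have htrA' : Matrix.trace ((A' : SL2) : Matrix (Fin 2) (Fin 2) ℝ)
        = Matrix.trace ((A₀ : SL2) : Matrix (Fin 2) (Fin 2) ℝ) := trace_conj M A₀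
    have hA'00 : |2 * (A' : Matrix (Fin 2) (Fin 2) ℝ) 0 0| < 2 := by
      have h2 : Matrix.trace ((A' : SL2) : Matrix (Fin 2) (Fin 2) ℝ)
          = 2 * (A' : Matrix (Fin 2) (Fin 2) ℝ) 0 0 := by
        rw [Matrix.trace_fin_two, hx']; ring
      rw [← h2, htrA']
      exact hell
    have hdA' := detE A'
    rw [hx', hy'] at hdA'
    have hy1 : (A' : Matrix (Fin 2) (Fin 2) ℝ) 0 1 ≠ 0 := by
      intro h0
      rw [h0] at hdA'
      rcases abs_lt.mp hA'00 with ⟨l1, l2⟩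
      nlinarith
    -- the commutator
    clear_value B' A'
    set K : SL2 := B * A₀ * B⁻¹ * A₀⁻¹ with hK
    have hKG : K ∈ G := by
      exact mul_mem (mul_mem (mul_mem hB hA₀G) (inv_mem hB)) (inv_mem hA₀G)
    clear_value K
    have hKc : M⁻¹ * K * M = B' * A' * B'⁻¹ * A'⁻¹ := by
      rw [hK, hB', hA']
      group
    have htrK : Matrix.trace ((K : SL2) : Matrix (Fin 2) (Fin 2) ℝ)
        = 2 + ((A' : Matrix (Fin 2) (Fin 2) ℝ) 0 1) ^ 2
            * (((B' : Matrix (Fin 2) (Fin 2) ℝ) 0 0 - B' 1 1) ^ 2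
              + ((B' : Matrix (Fin 2) (Fin 2) ℝ) 0 1 + B' 1 0) ^ 2) := by
      rw [← trace_conj M K, hKc]
      exact comm_trace B' A' hx' hy'
    have hS : ((B' : Matrix (Fin 2) (Fin 2) ℝ) 0 0 - B' 1 1) ^ 2
        + ((B' : Matrix (Fin 2) (Fin 2) ℝ) 0 1 + B' 1 0) ^ 2 = 0 := by
      have hSnn : 0 ≤ ((B' : Matrix (Fin 2) (Fin 2) ℝ) 0 0 - B' 1 1) ^ 2
          + ((B' : Matrix (Fin 2) (Fin 2) ℝ) 0 1 + B' 1 0) ^ 2 := by positivity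
      have hprod : 0 ≤ ((A' : Matrix (Fin 2) (Fin 2) ℝ) 0 1) ^ 2
          * (((B' : Matrix (Fin 2) (Fin 2) ℝ) 0 0 - B' 1 1) ^ 2
            + ((B' : Matrix (Fin 2) (Fin 2) ℝ) 0 1 + B' 1 0) ^ 2) :=
        mul_nonneg (sq_nonneg _) hSnn
      rcases hG K hKG with h1 | h1 | h1
      · have hcard : Matrix.trace (1 : Matrix (Fin 2) (Fin 2) ℝ) = 2 := by
          simp [Matrix.trace_fin_two, Matrix.one_apply]
        rw [h1, hcard] at htrK
        have h0 : ((A' : Matrix (Fin 2) (Fin 2) ℝ) 0 1) ^ 2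
            * (((B' : Matrix (Fin 2) (Fin 2) ℝ) 0 0 - B' 1 1) ^ 2
              + ((B' : Matrix (Fin 2) (Fin 2) ℝ) 0 1 + B' 1 0) ^ 2) = 0 := by linarith
        have hsq : ((A' : Matrix (Fin 2) (Fin 2) ℝ) 0 1) ^ 2 ≠ 0 := pow_ne_zero 2 hy1
        rcases mul_eq_zero.mp h0 with h | h
        · exact absurd h hsq
        · exact h
      · exfalso
        have hcard : Matrix.trace (-1 : Matrix (Fin 2) (Fin 2) ℝ) = -2 := by
          simp [Matrix.trace_fin_two, Matrix.one_apply]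
        rw [h1, hcard] at htrK
        linarith
      · exfalso
        rw [htrK] at h1
        have := (abs_lt.mp h1).2
        linarith
    have hq1 : ((B' : Matrix (Fin 2) (Fin 2) ℝ) 0 0 - B' 1 1) ^ 2 = 0 :=
      le_antisymm (by linarith [sq_nonneg ((B' : Matrix (Fin 2) (Fin 2) ℝ) 0 1 + B' 1 0)])
        (sq_nonneg _)
    have hq2 : ((B' : Matrix (Fin 2) (Fin 2) ℝ) 0 1 + B' 1 0) ^ 2 = 0 :=
      le_antisymm (by linarith [sq_nonneg ((B' : Matrix (Fin 2) (Fin 2) ℝ) 0 0 - B' 1 1)])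
        (sq_nonneg _)
    have hB'11 : (B' : Matrix (Fin 2) (Fin 2) ℝ) 1 1 = B' 0 0 := by
      have := sq_eq_zero_iff.mp hq1
      linarith
    have hB'10 : (B' : Matrix (Fin 2) (Fin 2) ℝ) 1 0 = -((B' : Matrix (Fin 2) (Fin 2) ℝ) 0 1) := by
      have := sq_eq_zero_iff.mp hq2
      linarith
    have hB'I : B' • iH = iH := fixI_of B' hB'11 hB'10
    have h3 := congrArg (fun t => M • t) hB'I
    simp only [smul_smul] at h3
    have h4 : M * B' = B * M := by rw [hB']; group
    rw [h4, hMI] at h3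
    rw [mul_smul, hMI] at h3
    exact h3
end
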